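/- Let λ > 0, ε > 0, and let Y ∈ ℍ^{M×N} admit a QSVD Y = U * Λ * Vᴴ with singular values y : Fin m → ℝ, where m = min(M, N). For each i set Δ i = (y i − ε)² − 4(λ − (y i)·ε) and h_i(a) = ½(a − y i)² + λ·log(a + ε). Let a : Fin m → ℝ satisfy: a i ≥ 0 for all i; a i = 0 whenever Δ i ≤ 0; and whenever Δ i > 0, a i ∈ {0, ½(y i − ε + √(Δ i))} with h_i(a i) ≤ h_i(b) for the other element b of that two-element set. Then the quaternion matrix X̂ = U * Â * Vᴴ, where Â ∈ ℍ^{M×N} is the rectangular diagonal matrix of a, is a global minimizer: for every X ∈ ℍ^{M×N} admitting a QSVD with singular values x : Fin m → ℝ, one has ½·Σ_{i,j} ‖Y i j − X̂ i j‖² + λ·Σ_{i=1}^{m} log(a i + ε) ≤ ½·Σ_{i,j} ‖Y i j − X i j‖² + λ·Σ_{i=1}^{m} log(x i + ε). -/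

import Mathlib

noncomputable section

open Matrix

abbrev ℍ : Type := Quaternion ℝ

/-- The `M × N` rectangular diagonal quaternion matrix of `σ : Fin K → ℝ`:
entry `(i, j)` is `σ i` when `i` and `j` have equal numerical index (below `K`), else `0`. -/
def rectDiag (M N : ℕ) {K : ℕ} (σ : Fin K → ℝ) : Matrix (Fin M) (Fin N) ℍ :=
  Matrix.of fun i j =>
    if h : (i : ℕ) = (j : ℕ) ∧ (i : ℕ) < K then ((σ ⟨i, h.2⟩ : ℝ) : ℍ) else 0

/-- A square quaternion matrix is unitary if `A * Aᴴ = Aᴴ * A = 1`. -/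
def IsUnitary {n : ℕ} (A : Matrix (Fin n) (Fin n) ℍ) : Prop :=
  A * Aᴴ = 1 ∧ Aᴴ * A = 1

/-- `IsQSVD A U σ V` : `A = U * D * Vᴴ` is a quaternion singular value decomposition of `A`,
with `U`, `V` unitary and `σ` a nonincreasing nonnegative family of singular values. -/
def IsQSVD {M N : ℕ} (A : Matrix (Fin M) (Fin N) ℍ)
    (U : Matrix (Fin M) (Fin M) ℍ) (σ : Fin (min M N) → ℝ)
    (V : Matrix (Fin N) (Fin N) ℍ) : Prop :=
  IsUnitary U ∧ IsUnitary V ∧ Antitone σ ∧ (∀ i, 0 ≤ σ i) ∧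
    A = U * rectDiag M N σ * Vᴴ

/-- `A` admits a QSVD with singular values `σ`. -/
def HasQSVD {M N : ℕ} (A : Matrix (Fin M) (Fin N) ℍ) (σ : Fin (min M N) → ℝ) : Prop :=
  ∃ U V, IsQSVD A U σ V


-- ## Auxiliary lemmas


lemma hfun_deriv (lam ε y : ℝ) {t : ℝ} (ht : -ε < t) :
    HasDerivAt (fun t => (1/2)*(t - y)^2 + lam * Real.log (t + ε))
      ((t - y) + lam * (t + ε)⁻¹) t := by
  have h1 : HasDerivAt (fun t : ℝ => (1/2)*(t - y)^2) (t - y) t := by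
    have h := (((hasDerivAt_id t).sub_const y).pow 2).const_mul (1/2 : ℝ)
    refine h.congr_deriv ?_
    simp only [id_eq]
    ring
  have hne : t + ε ≠ 0 := by linarith
  have h2 : HasDerivAt (fun t : ℝ => Real.log (t + ε)) ((t+ε)⁻¹) t := by
    have := (Real.hasDerivAt_log hne).comp t ((hasDerivAt_id t).add_const ε)
    rw [mul_one] at this
    exact this
  exact h1.add (h2.const_mul lam)

lemma hfun_mono (lam ε y : ℝ) (hε : 0 < ε) {s u : ℝ} (hs : 0 ≤ s) (hsu : s ≤ u)
    (hq : ∀ t ∈ Set.Icc s u, 0 ≤ (t - y) * (t + ε) + lam) :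
    (1/2)*(s - y)^2 + lam * Real.log (s + ε) ≤ (1/2)*(u - y)^2 + lam * Real.log (u + ε) := by
  set f : ℝ → ℝ := fun t => (1/2)*(t - y)^2 + lam * Real.log (t + ε) with hf
  have hder : ∀ t ∈ Set.Icc s u, HasDerivAt f ((t - y) + lam * (t + ε)⁻¹) t := by
    intro t htm
    exact hfun_deriv lam ε y (by have := htm.1; linarith)
  have hmono : MonotoneOn f (Set.Icc s u) := by
    apply monotoneOn_of_deriv_nonneg (convex_Icc s u)
    · exact fun t htm => (hder t htm).continuousAt.continuousWithinAt
    · intro t htm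
      rw [interior_Icc] at htm
      exact ((hder t ⟨htm.1.le, htm.2.le⟩).differentiableAt).differentiableWithinAt
    · intro t htm
      rw [interior_Icc] at htm
      have htm' : t ∈ Set.Icc s u := ⟨htm.1.le, htm.2.le⟩
      rw [(hder t htm').deriv]
      have hpos : 0 < t + ε := by have := htm'.1; linarith
      have := hq t htm'
      have : 0 ≤ ((t - y) * (t + ε) + lam) / (t + ε) := div_nonneg this hpos.le
      calc (0:ℝ) ≤ ((t - y) * (t + ε) + lam) / (t + ε) := this
        _ = (t - y) + lam * (t + ε)⁻¹ := by field_simp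
  exact hmono ⟨le_refl s, hsu⟩ ⟨hsu, le_refl u⟩ hsu

lemma hfun_anti (lam ε y : ℝ) (hε : 0 < ε) {s u : ℝ} (hs : 0 ≤ s) (hsu : s ≤ u)
    (hq : ∀ t ∈ Set.Icc s u, (t - y) * (t + ε) + lam ≤ 0) :
    (1/2)*(u - y)^2 + lam * Real.log (u + ε) ≤ (1/2)*(s - y)^2 + lam * Real.log (s + ε) := by
  set f : ℝ → ℝ := fun t => (1/2)*(t - y)^2 + lam * Real.log (t + ε) with hf
  have hder : ∀ t ∈ Set.Icc s u, HasDerivAt f ((t - y) + lam * (t + ε)⁻¹) t := by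
    intro t htm
    exact hfun_deriv lam ε y (by have := htm.1; linarith)
  have hmono : AntitoneOn f (Set.Icc s u) := by
    apply antitoneOn_of_deriv_nonpos (convex_Icc s u)
    · exact fun t htm => (hder t htm).continuousAt.continuousWithinAt
    · intro t htm
      rw [interior_Icc] at htm
      exact ((hder t ⟨htm.1.le, htm.2.le⟩).differentiableAt).differentiableWithinAt
    · intro t htm
      rw [interior_Icc] at htm
      have htm' : t ∈ Set.Icc s u := ⟨htm.1.le, htm.2.le⟩
      rw [(hder t htm').deriv]
      have hpos : 0 < t + ε := by have := htm'.1; linarith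
      have := hq t htm'
      have h2 : ((t - y) * (t + ε) + lam) / (t + ε) ≤ 0 := div_nonpos_of_nonpos_of_nonneg this hpos.le
      calc (t - y) + lam * (t + ε)⁻¹ = ((t - y) * (t + ε) + lam) / (t + ε) := by field_simp
        _ ≤ 0 := h2
  exact hmono ⟨le_refl s, hsu⟩ ⟨hsu, le_refl u⟩ hsu

lemma scalar_min (lam ε y Δ a : ℝ) (hlam : 0 < lam) (hε : 0 < ε)
    (hΔ : Δ = (y - ε)^2 - 4*(lam - y*ε))
    (ha0 : 0 ≤ a)
    (hneg : Δ ≤ 0 → a = 0)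
    (hpos : 0 < Δ → (a = 0 ∨ a = (y - ε + Real.sqrt Δ)/2) ∧
      ((1/2)*(a - y)^2 + lam*Real.log (a+ε) ≤ (1/2)*((0:ℝ) - y)^2 + lam*Real.log (0+ε)) ∧
      ((1/2)*(a - y)^2 + lam*Real.log (a+ε) ≤
        (1/2)*((y - ε + Real.sqrt Δ)/2 - y)^2 + lam*Real.log ((y - ε + Real.sqrt Δ)/2+ε)))
    {t : ℝ} (ht : 0 ≤ t) :
    (1/2)*(a - y)^2 + lam*Real.log (a+ε) ≤ (1/2)*(t - y)^2 + lam*Real.log (t+ε) := by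
  rcases le_or_gt Δ 0 with hD | hD
  · -- q ≥ 0 everywhere
    rw [hneg hD]
    apply hfun_mono lam ε y hε (le_refl 0) ht
    intro s _
    nlinarith [sq_nonneg (s + (ε - y)/2), sq_nonneg (s - y + ε)]
  · set sq := Real.sqrt Δ with hsq
    have hsqnn : 0 ≤ sq := Real.sqrt_nonneg _
    have hsq2 : sq ^ 2 = Δ := Real.sq_sqrt hD.le
    set r : ℝ := (y - ε + sq)/2 with hr
    set r' : ℝ := (y - ε - sq)/2 with hr'
    have hfact : ∀ s : ℝ, (s - y) * (s + ε) + lam = (s - r) * (s - r') := by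
      intro s
      rw [hr, hr']
      linear_combination (1/4 : ℝ) * hsq2 + (1/4 : ℝ) * hΔ
    have hr'r : r' ≤ r := by rw [hr, hr']; linarith
    obtain ⟨hmem, hle0, hler⟩ := hpos hD
    rcases le_or_gt r 0 with hrle | hrpos
    · -- min at 0; a = 0 (or a = r = 0)
      have haz : a = 0 ∨ a = r := hmem
      have hha : (1/2)*(a - y)^2 + lam*Real.log (a+ε) = (1/2)*((0:ℝ) - y)^2 + lam*Real.log (0+ε) ∨
          (1/2)*(a - y)^2 + lam*Real.log (a+ε) ≤ (1/2)*((0:ℝ) - y)^2 + lam*Real.log (0+ε) := Or.inr hle0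
      have key : (1/2)*((0:ℝ) - y)^2 + lam*Real.log ((0:ℝ)+ε) ≤ (1/2)*(t - y)^2 + lam*Real.log (t+ε) := by
        apply hfun_mono lam ε y hε (le_refl 0) ht
        intro s hsm
        rw [hfact s]
        have h1 : 0 ≤ s - r := by have := hsm.1; linarith
        have h2 : 0 ≤ s - r' := by have := hsm.1; linarith
        exact mul_nonneg h1 h2
      exact le_trans hle0 key
    · -- r > 0 : min(h 0, h r)
      rcases le_total t r with htr | hrt
      · rcases le_total t r' with htr' | hr't
        · -- t ≤ r' : h 0 ≤ h t
          refine le_trans hle0 ?_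
          apply hfun_mono lam ε y hε (le_refl 0) ht
          intro s hsm
          rw [hfact s]
          have h1 : s - r ≤ 0 := by have := hsm.2; linarith
          have h2 : s - r' ≤ 0 := by have := hsm.2; linarith
          nlinarith [h1, h2]
        · -- r' ≤ t ≤ r : h r ≤ h t
          refine le_trans hler ?_
          apply hfun_anti lam ε y hε ht htr
          intro s hsm
          rw [hfact s]
          apply mul_nonpos_of_nonpos_of_nonneg
          · have := hsm.2; linarith
          · have := hsm.1; linarith
      · -- r ≤ t : h r ≤ h t
        refine le_trans hler ?_
        apply hfun_mono lam ε y hε hrpos.le hrt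
        intro s hsm
        rw [hfact s]
        have h1 : 0 ≤ s - r := by have := hsm.1; linarith
        have h2 : 0 ≤ s - r' := by have := hsm.1; linarith
        exact mul_nonneg h1 h2


lemma re_sum {ι : Type*} (s : Finset ι) (f : ι → ℍ) : (∑ i ∈ s, f i).re = ∑ i ∈ s, (f i).re := by
  induction s using Finset.cons_induction with
  | empty => simp [Quaternion.re_zero]
  | cons i s hi ih => simp [Finset.sum_cons, ih]

lemma re_mul_comm (p q : ℍ) : (p * q).re = (q * p).re := by
  simp only [Quaternion.re_mul]; ring

lemma norm_sq_eq (q : ℍ) : ‖q‖ ^ 2 = (q * star q).re := by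
  rw [sq, ← Quaternion.normSq_eq_norm_mul_self, Quaternion.normSq_def]

lemma norm_sq_eq' (q : ℍ) : ‖q‖ ^ 2 = (star q * q).re := by
  rw [norm_sq_eq, re_mul_comm]

-- trace forms of Frobenius norm
lemma frob_tr_right {M N : ℕ} (B : Matrix (Fin M) (Fin N) ℍ) :
    ∑ i, ∑ j, ‖B i j‖ ^ 2 = ∑ i, ((B * Bᴴ) i i).re := by
  refine Finset.sum_congr rfl fun i _ => ?_
  rw [Matrix.mul_apply, re_sum]
  refine Finset.sum_congr rfl fun j _ => ?_
  rw [norm_sq_eq, Matrix.conjTranspose_apply]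

lemma frob_tr_left {M N : ℕ} (B : Matrix (Fin M) (Fin N) ℍ) :
    ∑ i, ∑ j, ‖B i j‖ ^ 2 = ∑ j, ((Bᴴ * B) j j).re := by
  rw [Finset.sum_comm]
  refine Finset.sum_congr rfl fun j _ => ?_
  rw [Matrix.mul_apply, re_sum]
  refine Finset.sum_congr rfl fun i _ => ?_
  rw [norm_sq_eq', Matrix.conjTranspose_apply]

lemma frob_unitary {M N : ℕ} (U : Matrix (Fin M) (Fin M) ℍ) (V : Matrix (Fin N) (Fin N) ℍ)
    (hU : Uᴴ * U = 1) (hV : Vᴴ * V = 1) (A : Matrix (Fin M) (Fin N) ℍ) :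
    ∑ i, ∑ j, ‖(U * A * Vᴴ) i j‖ ^ 2 = ∑ i, ∑ j, ‖A i j‖ ^ 2 := by
  have key1 : Uᴴ * (U * (A * Vᴴ)) = A * Vᴴ := by rw [← Matrix.mul_assoc, hU, Matrix.one_mul]
  have step1 : ∑ i, ∑ j, ‖(U * A * Vᴴ) i j‖ ^ 2 = ∑ i, ∑ j, ‖(A * Vᴴ) i j‖ ^ 2 := by
    rw [frob_tr_left, frob_tr_left (A * Vᴴ)]
    congr 1
    simp only [Matrix.conjTranspose_mul, Matrix.mul_assoc, key1]
  have key2 : Vᴴ * (Vᴴᴴ * Aᴴ) = Aᴴ := by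
    rw [Matrix.conjTranspose_conjTranspose, ← Matrix.mul_assoc, hV, Matrix.one_mul]
  have step2 : ∑ i, ∑ j, ‖(A * Vᴴ) i j‖ ^ 2 = ∑ i, ∑ j, ‖A i j‖ ^ 2 := by
    rw [frob_tr_right, frob_tr_right A]
    congr 1
    simp only [Matrix.conjTranspose_mul, Matrix.mul_assoc, key2]
  rw [step1, step2]

-- rectDiag lemmas
lemma rectDiag_sub (M N : ℕ) {K : ℕ} (σ τ : Fin K → ℝ) :
    rectDiag M N σ - rectDiag M N τ = rectDiag M N (fun i => σ i - τ i) := by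
  refine Matrix.ext fun i j => ?_
  simp only [rectDiag, Matrix.sub_apply, Matrix.of_apply]
  by_cases h : (i : ℕ) = (j : ℕ) ∧ (i : ℕ) < K
  · rw [dif_pos h, dif_pos h, dif_pos h]
    push_cast
    ring
  · rw [dif_neg h, dif_neg h, dif_neg h, sub_zero]

lemma rectDiag_conjTranspose (M N : ℕ) {K : ℕ} (σ : Fin K → ℝ) :
    (rectDiag M N σ)ᴴ = rectDiag N M σ := by
  refine Matrix.ext fun j i => ?_
  simp only [Matrix.conjTranspose_apply, rectDiag, Matrix.of_apply]
  by_cases h : (i : ℕ) = (j : ℕ) ∧ (i : ℕ) < K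
  · have h' : (j : ℕ) = (i : ℕ) ∧ (j : ℕ) < K := ⟨h.1.symm, h.1 ▸ h.2⟩
    rw [dif_pos h, dif_pos h']
    simp only [Quaternion.star_coe]
    have : (⟨(i : ℕ), h.2⟩ : Fin K) = ⟨(j : ℕ), h'.2⟩ := Fin.ext h.1
    rw [this]
  · have h' : ¬((j : ℕ) = (i : ℕ) ∧ (j : ℕ) < K) := by
      intro hc; exact h ⟨hc.1.symm, hc.1 ▸ hc.2⟩
    rw [dif_neg h, dif_neg h', star_zero]

-- helper: sum of a dite over Fin M restricted below K
lemma sum_dite_fin {M K : ℕ} (hKM : K ≤ M) (g : ∀ i : ℕ, i < K → ℝ) :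
    ∑ i : Fin M, (if h : (i : ℕ) < K then g i h else 0) = ∑ i : Fin K, g i i.2 := by
  set f : ℕ → ℝ := fun n => if h : n < K then g n h else 0 with hf
  have h1 : ∑ i : Fin M, (if h : (i : ℕ) < K then g i h else 0) = ∑ n ∈ Finset.range M, f n := by
    rw [← Fin.sum_univ_eq_sum_range]
  have h2 : ∑ i : Fin K, g i i.2 = ∑ n ∈ Finset.range K, f n := by
    rw [← Fin.sum_univ_eq_sum_range]
    refine Finset.sum_congr rfl fun i _ => ?_
    rw [hf]
    simp only [i.2, dif_pos]
  rw [h1, h2]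
  symm
  apply Finset.sum_subset (Finset.range_subset_range.mpr hKM)
  intro n _ hn
  rw [Finset.mem_range] at hn
  rw [hf]
  exact dif_neg hn

lemma frob_rectDiag (M N : ℕ) (σ : Fin (min M N) → ℝ) :
    ∑ i, ∑ j, ‖rectDiag M N σ i j‖ ^ 2 = ∑ i, (σ i) ^ 2 := by
  have hKM : min M N ≤ M := min_le_left _ _
  have hKN : min M N ≤ N := min_le_right _ _
  have inner : ∀ i : Fin M, ∑ j, ‖rectDiag M N σ i j‖ ^ 2
      = if h : (i : ℕ) < min M N then (σ ⟨i, h⟩) ^ 2 else 0 := by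
    intro i
    by_cases h : (i : ℕ) < min M N
    · rw [dif_pos h]
      have hjN : (i : ℕ) < N := lt_of_lt_of_le h hKN
      rw [Finset.sum_eq_single (⟨(i : ℕ), hjN⟩ : Fin N)]
      · simp only [rectDiag, Matrix.of_apply]
        rw [dif_pos ⟨trivial, h⟩, Quaternion.norm_coe]
        exact sq_abs _
      · intro j _ hj
        simp only [rectDiag, Matrix.of_apply]
        rw [dif_neg]
        · simp
        · rintro ⟨h1, -⟩
          exact hj (by ext; exact h1.symm)
      · intro hmem
        exact absurd (Finset.mem_univ _) hmem
    · rw [dif_neg h]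
      apply Finset.sum_eq_zero
      intro j _
      simp only [rectDiag, Matrix.of_apply]
      rw [dif_neg]
      · simp
      · rintro ⟨-, h2⟩
        exact h h2
  calc ∑ i : Fin M, ∑ j, ‖rectDiag M N σ i j‖ ^ 2
      = ∑ i : Fin M, (if h : (i : ℕ) < min M N then (σ ⟨i, h⟩) ^ 2 else 0) :=
        Finset.sum_congr rfl fun i _ => inner i
    _ = ∑ i : Fin (min M N), (σ i) ^ 2 := by
        rw [sum_dite_fin hKM (fun n hn => (σ ⟨n, hn⟩) ^ 2)]

open Finset


lemma filter_le_range {m n : ℕ} (hmn : m < n) :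
    (Finset.range n).filter (fun i => i ≤ m) = Finset.range (m+1) := by
  ext i
  simp only [Finset.mem_filter, Finset.mem_range]
  omega

lemma sum_comm4 {α : Type*} [AddCommMonoid α] (s t u v : Finset ℕ)
    (f : ℕ → ℕ → ℕ → ℕ → α) :
    ∑ i ∈ s, ∑ j ∈ t, ∑ k ∈ u, ∑ l ∈ v, f i j k l
      = ∑ k ∈ u, ∑ l ∈ v, ∑ i ∈ s, ∑ j ∈ t, f i j k l := by
  calc ∑ i ∈ s, ∑ j ∈ t, ∑ k ∈ u, ∑ l ∈ v, f i j k l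
      = ∑ i ∈ s, ∑ k ∈ u, ∑ j ∈ t, ∑ l ∈ v, f i j k l :=
        Finset.sum_congr rfl fun i _ => Finset.sum_comm
    _ = ∑ k ∈ u, ∑ i ∈ s, ∑ j ∈ t, ∑ l ∈ v, f i j k l := Finset.sum_comm
    _ = ∑ k ∈ u, ∑ i ∈ s, ∑ l ∈ v, ∑ j ∈ t, f i j k l :=
        Finset.sum_congr rfl fun k _ => Finset.sum_congr rfl fun i _ => Finset.sum_comm
    _ = ∑ k ∈ u, ∑ l ∈ v, ∑ i ∈ s, ∑ j ∈ t, f i j k l :=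
        Finset.sum_congr rfl fun k _ => Finset.sum_comm

lemma Tbound (n k l : ℕ) (C D : ℝ) (hC : 0 ≤ C) (hD : 0 ≤ D)
    (S : ℕ → ℕ → ℝ) (hS : ∀ i j, 0 ≤ S i j)
    (hrow : ∀ i, ∑ j ∈ range n, S i j ≤ 1) :
    ∑ i ∈ range n, ∑ j ∈ range n, (if i ≤ k then C else 0) * (if j ≤ l then D else 0) * S i j
      ≤ (k + 1 : ℝ) * (C * D) := by
  have step1 : ∀ i ∈ range n,
      ∑ j ∈ range n, (if i ≤ k then C else 0) * (if j ≤ l then D else 0) * S i j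
        ≤ (if i ≤ k then C * D else 0) := by
    intro i _
    by_cases hik : i ≤ k
    · simp only [if_pos hik]
      calc ∑ j ∈ range n, C * (if j ≤ l then D else 0) * S i j
          ≤ ∑ j ∈ range n, C * D * S i j := by
            apply Finset.sum_le_sum
            intro j _
            by_cases hjl : j ≤ l
            · simp [hjl]
            · simp only [if_neg hjl, mul_zero, zero_mul]
              exact mul_nonneg (mul_nonneg hC hD) (hS i j)
        _ = C * D * ∑ j ∈ range n, S i j := by rw [Finset.mul_sum]
        _ ≤ C * D * 1 := by
            apply mul_le_mul_of_nonneg_left (hrow i) (by positivity)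
        _ = C * D := mul_one _
    · simp only [if_neg hik, zero_mul]
      simp
  calc ∑ i ∈ range n, ∑ j ∈ range n, (if i ≤ k then C else 0) * (if j ≤ l then D else 0) * S i j
      ≤ ∑ i ∈ range n, (if i ≤ k then C * D else 0) := Finset.sum_le_sum step1
    _ = ∑ i ∈ (range n).filter (fun i => i ≤ k), (C * D) := (Finset.sum_filter _ _).symm
    _ = ((range n).filter (fun i => i ≤ k)).card * (C * D) := by
        rw [Finset.sum_const, nsmul_eq_mul]
    _ ≤ (k + 1 : ℝ) * (C * D) := by
        apply mul_le_mul_of_nonneg_right _ (by positivity)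
        have hsub : (range n).filter (fun i => i ≤ k) ⊆ range (k+1) := by
          intro i hi
          simp only [Finset.mem_filter] at hi
          simp only [Finset.mem_range]
          omega
        have := Finset.card_le_card hsub
        rw [Finset.card_range] at this
        exact_mod_cast this

lemma substoch (n : ℕ) (y x : ℕ → ℝ) (hy : Antitone y) (hx : Antitone x)
    (hyn : y n = 0) (hxn : x n = 0)
    (S : ℕ → ℕ → ℝ) (hS : ∀ i j, 0 ≤ S i j)
    (hrow : ∀ i, ∑ j ∈ range n, S i j ≤ 1)
    (hcol : ∀ j, ∑ i ∈ range n, S i j ≤ 1) :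
    ∑ i ∈ range n, ∑ j ∈ range n, y i * x j * S i j ≤ ∑ i ∈ range n, y i * x i := by
  set c : ℕ → ℝ := fun k => y k - y (k+1) with hcdef
  set d : ℕ → ℝ := fun k => x k - x (k+1) with hddef
  have hc : ∀ k, 0 ≤ c k := fun k => sub_nonneg.mpr (hy (Nat.le_succ k))
  have hd : ∀ k, 0 ≤ d k := fun k => sub_nonneg.mpr (hx (Nat.le_succ k))
  have filter_ge : ∀ i : ℕ, (range n).filter (fun k => i ≤ k) = Finset.Ico i n := by
    intro i
    ext k
    simp only [Finset.mem_filter, Finset.mem_range, Finset.mem_Ico]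
    omega
  have telescope : ∀ (f : ℕ → ℝ), f n = 0 → ∀ i < n,
      f i = ∑ k ∈ range n, (if i ≤ k then f k - f (k+1) else 0) := by
    intro f hfn i hin
    rw [← Finset.sum_filter, filter_ge i,
      Finset.sum_Ico_eq_sub _ (le_of_lt hin), Finset.sum_range_sub' f, Finset.sum_range_sub' f,
      hfn]
    ring
  -- rewrite LHS
  have hLHS : ∑ i ∈ range n, ∑ j ∈ range n, y i * x j * S i j
      = ∑ k ∈ range n, ∑ l ∈ range n, ∑ i ∈ range n, ∑ j ∈ range n,
          (if i ≤ k then c k else 0) * (if j ≤ l then d l else 0) * S i j := by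
    rw [← sum_comm4]
    refine Finset.sum_congr rfl fun i hi => Finset.sum_congr rfl fun j hj => ?_
    rw [Finset.mem_range] at hi hj
    rw [telescope y hyn i hi, telescope x hxn j hj, Finset.sum_mul_sum, Finset.sum_mul]
    refine Finset.sum_congr rfl fun k _ => ?_
    rw [Finset.sum_mul]
  -- rewrite RHS
  have hinner : ∀ k ∈ range n, ∀ l ∈ range n,
      ∑ i ∈ range n, (if i ≤ k then c k else 0) * (if i ≤ l then d l else 0)
        = ((min k l + 1 : ℕ) : ℝ) * (c k * d l) := by
    intro k hk l hl
    rw [Finset.mem_range] at hk hl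
    have h1 : ∀ i, (if i ≤ k then c k else 0) * (if i ≤ l then d l else 0)
        = if i ≤ min k l then c k * d l else 0 := by
      intro i
      rcases le_or_gt i (min k l) with him | him
      · rw [if_pos him, if_pos (le_trans him (min_le_left _ _)),
          if_pos (le_trans him (min_le_right _ _))]
      · rw [if_neg (not_le.mpr him)]
        rcases Nat.lt_or_ge (min k l) i with _ | _
        · by_cases hik : i ≤ k
          · have hil : ¬ i ≤ l := by omega
            rw [if_neg hil, mul_zero]
          · rw [if_neg hik, zero_mul]
        · omega
    simp only [h1]
    rw [← Finset.sum_filter, filter_le_range (by omega : min k l < n), Finset.sum_const,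
      Finset.card_range, nsmul_eq_mul]
  have hRHS : ∑ i ∈ range n, y i * x i
      = ∑ k ∈ range n, ∑ l ∈ range n, ((min k l + 1 : ℕ) : ℝ) * (c k * d l) := by
    have step : ∑ i ∈ range n, y i * x i
        = ∑ k ∈ range n, ∑ l ∈ range n, ∑ i ∈ range n,
            (if i ≤ k then c k else 0) * (if i ≤ l then d l else 0) := by
      have e1 : ∀ i ∈ range n, y i * x i
          = ∑ k ∈ range n, ∑ l ∈ range n,
              (if i ≤ k then c k else 0) * (if i ≤ l then d l else 0) := by
        intro i hi
        rw [Finset.mem_range] at hi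
        rw [telescope y hyn i hi, telescope x hxn i hi, Finset.sum_mul_sum]
      rw [Finset.sum_congr rfl e1]
      calc ∑ i ∈ range n, ∑ k ∈ range n, ∑ l ∈ range n,
             (if i ≤ k then c k else 0) * (if i ≤ l then d l else 0)
          = ∑ k ∈ range n, ∑ i ∈ range n, ∑ l ∈ range n,
             (if i ≤ k then c k else 0) * (if i ≤ l then d l else 0) := Finset.sum_comm
        _ = ∑ k ∈ range n, ∑ l ∈ range n, ∑ i ∈ range n,
             (if i ≤ k then c k else 0) * (if i ≤ l then d l else 0) :=
            Finset.sum_congr rfl fun k _ => Finset.sum_comm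
    rw [step]
    refine Finset.sum_congr rfl fun k hk => Finset.sum_congr rfl fun l hl => ?_
    exact hinner k hk l hl
  rw [hLHS, hRHS]
  refine Finset.sum_le_sum fun k hk => Finset.sum_le_sum fun l hl => ?_
  rw [Finset.mem_range] at hk hl
  have b1 : ∑ i ∈ range n, ∑ j ∈ range n,
      (if i ≤ k then c k else 0) * (if j ≤ l then d l else 0) * S i j
        ≤ (k + 1 : ℝ) * (c k * d l) := Tbound n k l (c k) (d l) (hc k) (hd l) S hS hrow
  have b2 : ∑ i ∈ range n, ∑ j ∈ range n,
      (if i ≤ k then c k else 0) * (if j ≤ l then d l else 0) * S i j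
        ≤ (l + 1 : ℝ) * (c k * d l) := by
    have swap : ∑ i ∈ range n, ∑ j ∈ range n,
        (if i ≤ k then c k else 0) * (if j ≤ l then d l else 0) * S i j
        = ∑ j ∈ range n, ∑ i ∈ range n,
            (if j ≤ l then d l else 0) * (if i ≤ k then c k else 0) * (fun p q => S q p) j i := by
      rw [Finset.sum_comm]
      refine Finset.sum_congr rfl fun j _ => Finset.sum_congr rfl fun i _ => ?_
      ring
    rw [swap]
    have := Tbound n l k (d l) (c k) (hd l) (hc k) (fun p q => S q p) (fun p q => hS q p)
      (fun p => hcol p)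
    calc ∑ j ∈ range n, ∑ i ∈ range n,
          (if j ≤ l then d l else 0) * (if i ≤ k then c k else 0) * (fun p q => S q p) j i
        ≤ (l + 1 : ℝ) * (d l * c k) := this
      _ = (l + 1 : ℝ) * (c k * d l) := by ring
  have hmin : ((min k l + 1 : ℕ) : ℝ) = min ((k:ℝ) + 1) ((l:ℝ) + 1) := by
    push_cast
    rcases le_total k l with h | h
    · have h' : (k:ℝ) ≤ (l:ℝ) := by exact_mod_cast h
      rw [min_eq_left h', min_eq_left (by linarith)]
    · have h' : (l:ℝ) ≤ (k:ℝ) := by exact_mod_cast h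
      rw [min_eq_right h', min_eq_right (by linarith)]
  rw [hmin]
  rcases le_total ((k:ℝ)+1) ((l:ℝ)+1) with h | h
  · rw [min_eq_left h]; exact b1
  · rw [min_eq_right h]; exact b2

-- === von Neumann part ===

lemma coe_mul_re (r : ℝ) (q : ℍ) : (((r : ℍ)) * q).re = r * q.re := by
  simp [Quaternion.re_mul]

lemma re_mul_coe_mid (r : ℝ) (p q : ℍ) : (p * ((r : ℍ) * q)).re = r * (p * q).re := by
  simp only [Quaternion.re_mul]
  simp
  ring

lemma re_le_norm (q : ℍ) : q.re ≤ ‖q‖ := by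
  have h1 : q.re ^ 2 ≤ ‖q‖ ^ 2 := by
    rw [sq, sq, ← Quaternion.normSq_eq_norm_mul_self, Quaternion.normSq_def']
    nlinarith [sq_nonneg q.imI, sq_nonneg q.imJ, sq_nonneg q.imK]
  have h2 := Real.sqrt_le_sqrt h1
  rw [Real.sqrt_sq_eq_abs, Real.sqrt_sq (norm_nonneg q)] at h2
  linarith [le_abs_self q.re]

lemma re_mul_le (p q : ℍ) : (p * q).re ≤ (‖p‖ ^ 2 + ‖q‖ ^ 2) / 2 := by
  have h1 : (p * q).re ≤ ‖p * q‖ := re_le_norm _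
  rw [norm_mul] at h1
  nlinarith [sq_nonneg (‖p‖ - ‖q‖)]

lemma retr_comm {m n : ℕ} (P : Matrix (Fin m) (Fin n) ℍ) (Q : Matrix (Fin n) (Fin m) ℍ) :
    ∑ i, ((P * Q) i i).re = ∑ j, ((Q * P) j j).re := by
  simp only [Matrix.mul_apply, re_sum]
  rw [Finset.sum_comm]
  exact Finset.sum_congr rfl fun j _ => Finset.sum_congr rfl fun i _ => re_mul_comm _ _

lemma rowsum_one {M : ℕ} (B : Matrix (Fin M) (Fin M) ℍ) (hB : B * Bᴴ = 1) (i : Fin M) :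
    ∑ j, ‖B i j‖ ^ 2 = 1 := by
  have h1 : ((B * Bᴴ) i i).re = 1 := by rw [hB]; simp [Matrix.one_apply, Quaternion.re_one]
  rw [← h1, Matrix.mul_apply, re_sum]
  refine Finset.sum_congr rfl fun j _ => ?_
  rw [norm_sq_eq, Matrix.conjTranspose_apply]

lemma colsum_one {M : ℕ} (B : Matrix (Fin M) (Fin M) ℍ) (hB : Bᴴ * B = 1) (j : Fin M) :
    ∑ i, ‖B i j‖ ^ 2 = 1 := by
  have h1 : ((Bᴴ * B) j j).re = 1 := by rw [hB]; simp [Matrix.one_apply, Quaternion.re_one]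
  rw [← h1, Matrix.mul_apply, re_sum]
  refine Finset.sum_congr rfl fun i _ => ?_
  rw [norm_sq_eq', Matrix.conjTranspose_apply]

lemma sum_castLE_le {K N : ℕ} (hKN : K ≤ N) (f : Fin N → ℝ) (hf : ∀ j, 0 ≤ f j) :
    ∑ j : Fin K, f (Fin.castLE hKN j) ≤ ∑ j, f j := by
  have h1 : ∑ j : Fin K, f (Fin.castLE hKN j)
      = ∑ j ∈ Finset.univ.image (Fin.castLE hKN), f j :=
    (Finset.sum_image (fun u _ v _ e => Fin.castLE_injective hKN e)).symm
  rw [h1]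
  exact Finset.sum_le_sum_of_subset_of_nonneg (Finset.subset_univ _) fun j _ _ => hf j

lemma retr_expand {M N K : ℕ} (hKM : K ≤ M) (hKN : K ≤ N)
    (σ : Fin K → ℝ) (C : Matrix (Fin N) (Fin M) ℍ) :
    ∑ i : Fin M, ((rectDiag M N σ * C) i i).re
      = ∑ i : Fin K, σ i * (C (Fin.castLE hKN i) (Fin.castLE hKM i)).re := by
  have inner : ∀ i : Fin M, ((rectDiag M N σ * C) i i).re
      = if h : (i : ℕ) < K then
          σ ⟨i, h⟩ * (C ⟨(i : ℕ), lt_of_lt_of_le h hKN⟩ ⟨(i : ℕ), lt_of_lt_of_le h hKM⟩).re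
        else 0 := by
    intro i
    rw [Matrix.mul_apply, re_sum]
    by_cases h : (i : ℕ) < K
    · rw [dif_pos h]
      rw [Finset.sum_eq_single (⟨(i : ℕ), lt_of_lt_of_le h hKN⟩ : Fin N)]
      · simp only [rectDiag, Matrix.of_apply]
        rw [dif_pos ⟨trivial, h⟩, coe_mul_re]
      · intro j _ hj
        simp only [rectDiag, Matrix.of_apply]
        rw [dif_neg]
        · simp [Quaternion.re_zero]
        · rintro ⟨h1, -⟩
          exact hj (Fin.ext h1.symm)
      · intro hmem
        exact absurd (Finset.mem_univ _) hmem
    · rw [dif_neg h]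
      apply Finset.sum_eq_zero
      intro j _
      simp only [rectDiag, Matrix.of_apply]
      rw [dif_neg]
      · simp [Quaternion.re_zero]
      · rintro ⟨-, h2⟩
        exact h h2
  rw [Finset.sum_congr rfl fun i _ => inner i,
    sum_dite_fin hKM (fun n hn => σ ⟨n, hn⟩
      * (C ⟨n, lt_of_lt_of_le hn hKN⟩ ⟨n, lt_of_lt_of_le hn hKM⟩).re)]
  rfl

lemma entry_expand {M N K : ℕ} (hKM : K ≤ M) (hKN : K ≤ N)
    (x : Fin K → ℝ) (A : Matrix (Fin N) (Fin N) ℍ) (B : Matrix (Fin M) (Fin M) ℍ)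
    (q : Fin N) (p : Fin M) :
    ((A * (rectDiag N M x * B)) q p).re
      = ∑ j : Fin K, x j * (A q (Fin.castLE hKN j) * B (Fin.castLE hKM j) p).re := by
  have mid : ∀ j : Fin N, (rectDiag N M x * B) j p
      = if h : (j : ℕ) < K then ((x ⟨j, h⟩ : ℝ) : ℍ) * B ⟨(j : ℕ), lt_of_lt_of_le h hKM⟩ p
        else 0 := by
    intro j
    rw [Matrix.mul_apply]
    by_cases h : (j : ℕ) < K
    · rw [dif_pos h]
      rw [Finset.sum_eq_single (⟨(j : ℕ), lt_of_lt_of_le h hKM⟩ : Fin M)]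
      · simp only [rectDiag, Matrix.of_apply]
        rw [dif_pos ⟨trivial, h⟩]
      · intro r _ hr
        simp only [rectDiag, Matrix.of_apply]
        rw [dif_neg]
        · simp
        · rintro ⟨h1, -⟩
          exact hr (Fin.ext h1.symm)
      · intro hmem
        exact absurd (Finset.mem_univ _) hmem
    · rw [dif_neg h]
      apply Finset.sum_eq_zero
      intro r _
      simp only [rectDiag, Matrix.of_apply]
      rw [dif_neg]
      · simp
      · rintro ⟨-, h2⟩
        exact h h2
  rw [Matrix.mul_apply, re_sum]
  have inner : ∀ j : Fin N, (A q j * (rectDiag N M x * B) j p).re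
      = if h : (j : ℕ) < K then
          x ⟨j, h⟩ * (A q ⟨(j : ℕ), lt_of_lt_of_le h hKN⟩
            * B ⟨(j : ℕ), lt_of_lt_of_le h hKM⟩ p).re
        else 0 := by
    intro j
    rw [mid j]
    by_cases h : (j : ℕ) < K
    · rw [dif_pos h, dif_pos h, re_mul_coe_mid]
    · rw [dif_neg h, dif_neg h, mul_zero]
      simp [Quaternion.re_zero]
  rw [Finset.sum_congr rfl fun j _ => inner j,
    sum_dite_fin hKN (fun n hn => x ⟨n, hn⟩
      * (A q ⟨n, lt_of_lt_of_le hn hKN⟩ * B ⟨n, lt_of_lt_of_le hn hKM⟩ p).re)]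
  rfl

lemma vonNeumann {M N K : ℕ} (hKM : K ≤ M) (hKN : K ≤ N)
    (U : Matrix (Fin M) (Fin M) ℍ) (hU1 : U * Uᴴ = 1) (hU2 : Uᴴ * U = 1)
    (V : Matrix (Fin N) (Fin N) ℍ) (hV1 : V * Vᴴ = 1) (hV2 : Vᴴ * V = 1)
    (W : Matrix (Fin M) (Fin M) ℍ) (hW1 : W * Wᴴ = 1) (hW2 : Wᴴ * W = 1)
    (Z : Matrix (Fin N) (Fin N) ℍ) (hZ1 : Z * Zᴴ = 1) (hZ2 : Zᴴ * Z = 1)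
    (y x : Fin K → ℝ) (hy : Antitone y) (hx : Antitone x)
    (hy0 : ∀ i, 0 ≤ y i) (hx0 : ∀ i, 0 ≤ x i) :
    ∑ i, ∑ j, ((U * rectDiag M N y * Vᴴ) i j * star ((W * rectDiag M N x * Zᴴ) i j)).re
      ≤ ∑ i, y i * x i := by
  set Y := U * rectDiag M N y * Vᴴ with hYdef
  set X := W * rectDiag M N x * Zᴴ with hXdef
  set A : Matrix (Fin N) (Fin N) ℍ := Vᴴ * Z with hA
  set B : Matrix (Fin M) (Fin M) ℍ := Wᴴ * U with hB
  -- step 1: trace form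
  have step1 : ∑ i, ∑ j, (Y i j * star (X i j)).re = ∑ i, ((Y * Xᴴ) i i).re := by
    refine Finset.sum_congr rfl fun i _ => ?_
    rw [Matrix.mul_apply, re_sum]
    refine Finset.sum_congr rfl fun j _ => ?_
    rw [Matrix.conjTranspose_apply]
  -- step 2+3: cyclic rearrangement
  have step2 : Y * Xᴴ = U * (rectDiag M N y * (A * (rectDiag N M x * (Wᴴ)))) := by
    rw [hYdef, hXdef, Matrix.conjTranspose_mul, Matrix.conjTranspose_mul,
      rectDiag_conjTranspose, Matrix.conjTranspose_conjTranspose, hA]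
    simp only [Matrix.mul_assoc]
  have step3 : ∑ i, ((Y * Xᴴ) i i).re
      = ∑ i : Fin M, ((rectDiag M N y * (A * (rectDiag N M x * B))) i i).re := by
    rw [step2, retr_comm U (rectDiag M N y * (A * (rectDiag N M x * Wᴴ)))]
    congr 1
    rw [hB]
    simp only [Matrix.mul_assoc]
  -- step 4+5: expansion
  have step4 : ∑ i : Fin M, ((rectDiag M N y * (A * (rectDiag N M x * B))) i i).re
      = ∑ i : Fin K, ∑ j : Fin K, y i * (x j *
          (A (Fin.castLE hKN i) (Fin.castLE hKN j) * B (Fin.castLE hKM j) (Fin.castLE hKM i)).re) := by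
    rw [retr_expand hKM hKN]
    refine Finset.sum_congr rfl fun i _ => ?_
    rw [entry_expand hKM hKN, Finset.mul_sum]
  -- step 6: bound by substochastic sum
  set S : Fin K → Fin K → ℝ := fun i j =>
    (‖A (Fin.castLE hKN i) (Fin.castLE hKN j)‖ ^ 2
      + ‖B (Fin.castLE hKM j) (Fin.castLE hKM i)‖ ^ 2) / 2 with hS
  have hSnn : ∀ i j, 0 ≤ S i j := by
    intro i j
    rw [hS]
    positivity
  have step6 : ∑ i : Fin K, ∑ j : Fin K, y i * (x j *
        (A (Fin.castLE hKN i) (Fin.castLE hKN j) * B (Fin.castLE hKM j) (Fin.castLE hKM i)).re)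
      ≤ ∑ i : Fin K, ∑ j : Fin K, y i * x j * S i j := by
    refine Finset.sum_le_sum fun i _ => Finset.sum_le_sum fun j _ => ?_
    have hSij : S i j = (‖A (Fin.castLE hKN i) (Fin.castLE hKN j)‖ ^ 2
        + ‖B (Fin.castLE hKM j) (Fin.castLE hKM i)‖ ^ 2) / 2 := by rw [hS]
    rw [← mul_assoc, hSij]
    exact mul_le_mul_of_nonneg_left (re_mul_le _ _) (mul_nonneg (hy0 i) (hx0 j))
  -- unitarity of A and B
  have hAA : A * Aᴴ = 1 := by
    rw [hA, Matrix.conjTranspose_mul, Matrix.conjTranspose_conjTranspose]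
    calc Vᴴ * Z * (Zᴴ * V) = Vᴴ * (Z * Zᴴ * V) := by simp only [Matrix.mul_assoc]
      _ = 1 := by rw [hZ1, Matrix.one_mul, hV2]
  have hAA' : Aᴴ * A = 1 := by
    rw [hA, Matrix.conjTranspose_mul, Matrix.conjTranspose_conjTranspose]
    calc Zᴴ * V * (Vᴴ * Z) = Zᴴ * (V * Vᴴ * Z) := by simp only [Matrix.mul_assoc]
      _ = 1 := by rw [hV1, Matrix.one_mul, hZ2]
  have hBB : B * Bᴴ = 1 := by
    rw [hB, Matrix.conjTranspose_mul, Matrix.conjTranspose_conjTranspose]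
    calc Wᴴ * U * (Uᴴ * W) = Wᴴ * (U * Uᴴ * W) := by simp only [Matrix.mul_assoc]
      _ = 1 := by rw [hU1, Matrix.one_mul, hW2]
  have hBB' : Bᴴ * B = 1 := by
    rw [hB, Matrix.conjTranspose_mul, Matrix.conjTranspose_conjTranspose]
    calc Uᴴ * W * (Wᴴ * U) = Uᴴ * (W * Wᴴ * U) := by simp only [Matrix.mul_assoc]
      _ = 1 := by rw [hW1, Matrix.one_mul, hU2]
  -- row and column sums of S
  have hSrow : ∀ i : Fin K, ∑ j : Fin K, S i j ≤ 1 := by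
    intro i
    have e1 : ∑ j : Fin K, ‖A (Fin.castLE hKN i) (Fin.castLE hKN j)‖ ^ 2 ≤ 1 := by
      calc ∑ j : Fin K, ‖A (Fin.castLE hKN i) (Fin.castLE hKN j)‖ ^ 2
          ≤ ∑ j : Fin N, ‖A (Fin.castLE hKN i) j‖ ^ 2 :=
            sum_castLE_le hKN (fun j => ‖A (Fin.castLE hKN i) j‖ ^ 2) (fun j => sq_nonneg _)
        _ = 1 := rowsum_one A hAA _
    have e2 : ∑ j : Fin K, ‖B (Fin.castLE hKM j) (Fin.castLE hKM i)‖ ^ 2 ≤ 1 := by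
      calc ∑ j : Fin K, ‖B (Fin.castLE hKM j) (Fin.castLE hKM i)‖ ^ 2
          ≤ ∑ j : Fin M, ‖B j (Fin.castLE hKM i)‖ ^ 2 :=
            sum_castLE_le hKM (fun j => ‖B j (Fin.castLE hKM i)‖ ^ 2) (fun j => sq_nonneg _)
        _ = 1 := colsum_one B hBB' _
    rw [hS]
    simp only
    rw [← Finset.sum_div, Finset.sum_add_distrib]
    linarith
  have hScol : ∀ j : Fin K, ∑ i : Fin K, S i j ≤ 1 := by
    intro j
    have e1 : ∑ i : Fin K, ‖A (Fin.castLE hKN i) (Fin.castLE hKN j)‖ ^ 2 ≤ 1 := by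
      calc ∑ i : Fin K, ‖A (Fin.castLE hKN i) (Fin.castLE hKN j)‖ ^ 2
          ≤ ∑ i : Fin N, ‖A i (Fin.castLE hKN j)‖ ^ 2 :=
            sum_castLE_le hKN (fun i => ‖A i (Fin.castLE hKN j)‖ ^ 2) (fun i => sq_nonneg _)
        _ = 1 := colsum_one A hAA' _
    have e2 : ∑ i : Fin K, ‖B (Fin.castLE hKM j) (Fin.castLE hKM i)‖ ^ 2 ≤ 1 := by
      calc ∑ i : Fin K, ‖B (Fin.castLE hKM j) (Fin.castLE hKM i)‖ ^ 2
          ≤ ∑ i : Fin M, ‖B (Fin.castLE hKM j) i‖ ^ 2 :=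
            sum_castLE_le hKM (fun i => ‖B (Fin.castLE hKM j) i‖ ^ 2) (fun i => sq_nonneg _)
        _ = 1 := rowsum_one B hBB _
    rw [hS]
    simp only
    rw [← Finset.sum_div, Finset.sum_add_distrib]
    linarith
  -- step 7: substochastic inequality, transported to ℕ
  have step7 : ∑ i : Fin K, ∑ j : Fin K, y i * x j * S i j ≤ ∑ i : Fin K, y i * x i := by
    set yh : ℕ → ℝ := fun n => if h : n < K then y ⟨n, h⟩ else 0 with hyh
    set xh : ℕ → ℝ := fun n => if h : n < K then x ⟨n, h⟩ else 0 with hxh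
    set Sh : ℕ → ℕ → ℝ := fun m n =>
      if h : m < K ∧ n < K then S ⟨m, h.1⟩ ⟨n, h.2⟩ else 0 with hSh
    have hyha : Antitone yh := by
      intro m n hmn
      rw [hyh]
      simp only
      by_cases hn : n < K
      · rw [dif_pos hn, dif_pos (lt_of_le_of_lt hmn hn)]
        exact hy (by exact hmn)
      · rw [dif_neg hn]
        by_cases hm : m < K
        · rw [dif_pos hm]; exact hy0 _
        · rw [dif_neg hm]
    have hxha : Antitone xh := by
      intro m n hmn
      rw [hxh]
      simp only
      by_cases hn : n < K
      · rw [dif_pos hn, dif_pos (lt_of_le_of_lt hmn hn)]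
        exact hx (by exact hmn)
      · rw [dif_neg hn]
        by_cases hm : m < K
        · rw [dif_pos hm]; exact hx0 _
        · rw [dif_neg hm]
    have hShnn : ∀ m n, 0 ≤ Sh m n := by
      intro m n
      rw [hSh]
      simp only
      by_cases hc : m < K ∧ n < K
      · rw [dif_pos hc]; exact hSnn _ _
      · rw [dif_neg hc]
    have conv : ∀ (f : Fin K → ℝ), ∑ n ∈ Finset.range K, (if h : n < K then f ⟨n, h⟩ else 0)
        = ∑ i : Fin K, f i := by
      intro f
      rw [← Fin.sum_univ_eq_sum_range (fun n => if h : n < K then f ⟨n, h⟩ else 0) K]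
      refine Finset.sum_congr rfl fun i _ => ?_
      rw [dif_pos i.2]
    have hShrow : ∀ m, ∑ n ∈ Finset.range K, Sh m n ≤ 1 := by
      intro m
      by_cases hm : m < K
      · have : ∑ n ∈ Finset.range K, Sh m n = ∑ j : Fin K, S ⟨m, hm⟩ j := by
          rw [← conv (fun j => S ⟨m, hm⟩ j)]
          refine Finset.sum_congr rfl fun n hn => ?_
          rw [Finset.mem_range] at hn
          rw [hSh]
          simp only
          rw [dif_pos ⟨hm, hn⟩, dif_pos hn]
        rw [this]
        exact hSrow _
      · have : ∑ n ∈ Finset.range K, Sh m n = 0 := by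
          apply Finset.sum_eq_zero
          intro n _
          rw [hSh]
          simp only
          rw [dif_neg (by tauto)]
        rw [this]
        norm_num
    have hShcol : ∀ n, ∑ m ∈ Finset.range K, Sh m n ≤ 1 := by
      intro n
      by_cases hn : n < K
      · have : ∑ m ∈ Finset.range K, Sh m n = ∑ i : Fin K, S i ⟨n, hn⟩ := by
          rw [← conv (fun i => S i ⟨n, hn⟩)]
          refine Finset.sum_congr rfl fun m hm => ?_
          rw [Finset.mem_range] at hm
          rw [hSh]
          simp only
          rw [dif_pos ⟨hm, hn⟩, dif_pos hm]
        rw [this]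
        exact hScol _
      · have : ∑ m ∈ Finset.range K, Sh m n = 0 := by
          apply Finset.sum_eq_zero
          intro m _
          rw [hSh]
          simp only
          rw [dif_neg (by tauto)]
        rw [this]
        norm_num
    have key := substoch K yh xh hyha hxha (by rw [hyh]; simp) (by rw [hxh]; simp)
      Sh hShnn hShrow hShcol
    have eL : ∑ i ∈ Finset.range K, ∑ j ∈ Finset.range K, yh i * xh j * Sh i j
        = ∑ i : Fin K, ∑ j : Fin K, y i * x j * S i j := by
      rw [← Fin.sum_univ_eq_sum_range (fun m => ∑ j ∈ Finset.range K, yh m * xh j * Sh m j) K]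
      refine Finset.sum_congr rfl fun i _ => ?_
      rw [← Fin.sum_univ_eq_sum_range (fun n => yh ↑i * xh n * Sh ↑i n) K]
      refine Finset.sum_congr rfl fun j _ => ?_
      rw [hyh, hxh, hSh]
      simp only
      rw [dif_pos i.2, dif_pos j.2, dif_pos ⟨i.2, j.2⟩]
    have eR : ∑ i ∈ Finset.range K, yh i * xh i = ∑ i : Fin K, y i * x i := by
      rw [← Fin.sum_univ_eq_sum_range (fun m => yh m * xh m) K]
      refine Finset.sum_congr rfl fun i _ => ?_
      rw [hyh, hxh]
      simp only
      rw [dif_pos i.2, dif_pos i.2]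
    rw [eL, eR] at key
    exact key
  rw [step1, step3, step4]
  exact le_trans step6 step7


lemma norm_sub_sq_quat (p q : ℍ) :
    ‖p - q‖ ^ 2 = ‖p‖ ^ 2 + ‖q‖ ^ 2 - 2 * (p * star q).re := by
  rw [sq, sq, sq, ← Quaternion.normSq_eq_norm_mul_self, ← Quaternion.normSq_eq_norm_mul_self,
    ← Quaternion.normSq_eq_norm_mul_self, Quaternion.normSq_def', Quaternion.normSq_def',
    Quaternion.normSq_def']
  simp [Quaternion.re_mul]
  ring

/-- Quaternion logarithmic singular value thresholding (QLSVT): applying the scalar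
thresholding operator to the singular values of `Y` yields a global minimizer of
`X ↦ ½ ‖Y - X‖_F² + λ ‖X‖_L^1` over matrices admitting a QSVD. -/
theorem qlsvt {M N : ℕ} (lam ε : ℝ) (hlam : 0 < lam) (hε : 0 < ε)
    (Y : Matrix (Fin M) (Fin N) ℍ)
    (U : Matrix (Fin M) (Fin M) ℍ) (y : Fin (min M N) → ℝ)
    (V : Matrix (Fin N) (Fin N) ℍ) (hY : IsQSVD Y U y V)
    (Δ : Fin (min M N) → ℝ)
    (hΔ : ∀ i, Δ i = (y i - ε) ^ 2 - 4 * (lam - y i * ε))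
    (h : Fin (min M N) → ℝ → ℝ)
    (hh : ∀ i a, h i a = (1 / 2) * (a - y i) ^ 2 + lam * Real.log (a + ε))
    (a : Fin (min M N) → ℝ)
    (ha0 : ∀ i, 0 ≤ a i)
    (haneg : ∀ i, Δ i ≤ 0 → a i = 0)
    (hapos : ∀ i, 0 < Δ i →
      a i ∈ ({0, (y i - ε + Real.sqrt (Δ i)) / 2} : Set ℝ) ∧
        ∀ b ∈ ({0, (y i - ε + Real.sqrt (Δ i)) / 2} : Set ℝ), h i (a i) ≤ h i b) :
    ∀ (X : Matrix (Fin M) (Fin N) ℍ) (x : Fin (min M N) → ℝ), HasQSVD X x →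
      (1 / 2) * (∑ i, ∑ j, ‖Y i j - (U * rectDiag M N a * Vᴴ) i j‖ ^ 2) +
          lam * ∑ i, Real.log (a i + ε) ≤
        (1 / 2) * (∑ i, ∑ j, ‖Y i j - X i j‖ ^ 2) + lam * ∑ i, Real.log (x i + ε) := by
  obtain ⟨⟨hU1, hU2⟩, ⟨hV1, hV2⟩, hyant, hy0, hYeq⟩ := hY
  intro X x hX
  obtain ⟨W, Z, ⟨hW1, hW2⟩, ⟨hZ1, hZ2⟩, hxant, hx0, hXeq⟩ := hX
  have hKM : min M N ≤ M := min_le_left _ _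
  have hKN : min M N ≤ N := min_le_right _ _
  -- LHS Frobenius part is exactly ∑ (y i - a i)²
  have e0 : Y - U * rectDiag M N a * Vᴴ = U * rectDiag M N (fun i => y i - a i) * Vᴴ := by
    rw [hYeq, ← Matrix.sub_mul, ← Matrix.mul_sub, rectDiag_sub]
  have hLfro : ∑ i, ∑ j, ‖Y i j - (U * rectDiag M N a * Vᴴ) i j‖ ^ 2
      = ∑ i, (y i - a i) ^ 2 := by
    calc ∑ i, ∑ j, ‖Y i j - (U * rectDiag M N a * Vᴴ) i j‖ ^ 2
        = ∑ i, ∑ j, ‖(Y - U * rectDiag M N a * Vᴴ) i j‖ ^ 2 := by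
          refine Finset.sum_congr rfl fun i _ => Finset.sum_congr rfl fun j _ => ?_
          rw [Matrix.sub_apply]
      _ = ∑ i, ∑ j, ‖(U * rectDiag M N (fun i => y i - a i) * Vᴴ) i j‖ ^ 2 := by rw [e0]
      _ = ∑ i, ∑ j, ‖rectDiag M N (fun i => y i - a i) i j‖ ^ 2 := frob_unitary U V hU2 hV2 _
      _ = ∑ i, (y i - a i) ^ 2 := frob_rectDiag M N _
  -- Frobenius norms of Y and X
  have hYfro : ∑ i, ∑ j, ‖Y i j‖ ^ 2 = ∑ i, (y i) ^ 2 := by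
    rw [hYeq, frob_unitary U V hU2 hV2, frob_rectDiag]
  have hXfro : ∑ i, ∑ j, ‖X i j‖ ^ 2 = ∑ i, (x i) ^ 2 := by
    rw [hXeq, frob_unitary W Z hW2 hZ2, frob_rectDiag]
  -- von Neumann trace inequality
  have hVN : ∑ i, ∑ j, (Y i j * star (X i j)).re ≤ ∑ i, y i * x i := by
    rw [hYeq, hXeq]
    exact vonNeumann hKM hKN U hU1 hU2 V hV1 hV2 W hW1 hW2 Z hZ1 hZ2 y x hyant hxant hy0 hx0
  -- expansion of ‖Y - X‖²
  have hexp : ∑ i, ∑ j, ‖Y i j - X i j‖ ^ 2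
      = (∑ i, ∑ j, ‖Y i j‖ ^ 2) + (∑ i, ∑ j, ‖X i j‖ ^ 2)
        - 2 * ∑ i, ∑ j, (Y i j * star (X i j)).re := by
    calc ∑ i, ∑ j, ‖Y i j - X i j‖ ^ 2
        = ∑ i, ∑ j, (‖Y i j‖ ^ 2 + ‖X i j‖ ^ 2 - 2 * (Y i j * star (X i j)).re) :=
          Finset.sum_congr rfl fun i _ => Finset.sum_congr rfl fun j _ => norm_sub_sq_quat _ _
      _ = _ := by
          simp only [Finset.sum_sub_distrib, Finset.sum_add_distrib, ← Finset.mul_sum]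
  have hfro_ge : ∑ i, (y i - x i) ^ 2 ≤ ∑ i, ∑ j, ‖Y i j - X i j‖ ^ 2 := by
    have expand2 : ∑ i, (y i - x i) ^ 2
        = ∑ i, (y i) ^ 2 + ∑ i, (x i) ^ 2 - 2 * ∑ i, y i * x i := by
      calc ∑ i, (y i - x i) ^ 2
          = ∑ i, ((y i) ^ 2 + (x i) ^ 2 - 2 * (y i * x i)) :=
            Finset.sum_congr rfl fun i _ => by ring
        _ = _ := by
            simp only [Finset.sum_sub_distrib, Finset.sum_add_distrib, ← Finset.mul_sum]
    rw [hexp, hYfro, hXfro, expand2]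
    linarith [hVN]
  -- scalar minimization, summed
  have hscal : ∑ i, ((1/2) * (a i - y i) ^ 2 + lam * Real.log (a i + ε))
      ≤ ∑ i, ((1/2) * (x i - y i) ^ 2 + lam * Real.log (x i + ε)) := by
    refine Finset.sum_le_sum fun i _ => ?_
    refine scalar_min lam ε (y i) (Δ i) (a i) hlam hε (hΔ i) (ha0 i) (haneg i) ?_ (hx0 i)
    intro hD
    obtain ⟨hm, hmin⟩ := hapos i hD
    simp only [Set.mem_insert_iff, Set.mem_singleton_iff] at hm
    refine ⟨hm, ?_, ?_⟩
    · have := hmin 0 (Set.mem_insert 0 _)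
      rw [hh, hh] at this
      exact this
    · have := hmin ((y i - ε + Real.sqrt (Δ i)) / 2)
        (Set.mem_insert_of_mem _ rfl)
      rw [hh, hh] at this
      exact this
  have hsplitA : ∑ i, ((1/2) * (a i - y i) ^ 2 + lam * Real.log (a i + ε))
      = (1/2) * (∑ i, (y i - a i) ^ 2) + lam * ∑ i, Real.log (a i + ε) := by
    rw [Finset.sum_add_distrib, ← Finset.mul_sum, ← Finset.mul_sum]
    congr 1
    congr 1
    exact Finset.sum_congr rfl fun i _ => by ring
  have hsplitX : ∑ i, ((1/2) * (x i - y i) ^ 2 + lam * Real.log (x i + ε))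
      = (1/2) * (∑ i, (y i - x i) ^ 2) + lam * ∑ i, Real.log (x i + ε) := by
    rw [Finset.sum_add_distrib, ← Finset.mul_sum, ← Finset.mul_sum]
    congr 1
    congr 1
    exact Finset.sum_congr rfl fun i _ => by ring
  rw [hLfro]
  rw [hsplitA, hsplitX] at hscal
  have : (1/2) * (∑ i, (y i - x i) ^ 2) ≤ (1/2) * (∑ i, ∑ j, ‖Y i j - X i j‖ ^ 2) := by
    linarith [hfro_ge]
  linarith [hscal]
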